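/- Let F be a free group of rank 2 (or more generally a non-cyclic finitely generated free group), and let G = ⟨F, t | t⁻¹ft = f for all f ∈ [F,F]⟩ be the HNN-extension of F with both associated subgroups equal to the commutator subgroup [F,F] and with the identity as the associated isomorphism. Then G is not finitely presented. -/

import Mathlib

/-- A group is finitely presented if it is isomorphic to the quotient of a finitely
generated free group by the normal closure of a finite set. -/
def IsFinitelyPresented (G : Type*) [Group G] : Prop :=
  ∃ (n : ℕ) (R : Finset (FreeGroup (Fin n))),
    Nonempty (G ≃* FreeGroup (Fin n) ⧸ Subgroup.normalClosure (R : Set (FreeGroup (Fin n))))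

open HNNExtension SemidirectProduct Multiplicative
open scoped commutatorElement


lemma britton_mem {G : Type*} [Group G] {A : Subgroup G} {g : G}
    (h : (t⁻¹ * of g * t : HNNExtension G A A (MulEquiv.refl A)) = of g) : g ∈ A := by
  by_contra hg
  have chain : List.Chain' (fun a b : ℤˣ × G => a.2 ∈ toSubgroup A A a.1 → a.1 = b.1)
      [((-1 : ℤˣ), g), ((1 : ℤˣ), 1)] := by
    refine List.isChain_cons_cons.2 ⟨?_, List.isChain_singleton _⟩
    intro hmem
    exact absurd hmem (by simpa [toSubgroup] using hg)
  let w : NormalWord.ReducedWord G A A := ⟨1, [((-1 : ℤˣ), g), ((1 : ℤˣ), 1)], chain⟩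
  have hprod : w.prod (MulEquiv.refl A) = t⁻¹ * of g * t := by
    simp [NormalWord.ReducedWord.prod, w, mul_assoc]
  have hmem : w.prod (MulEquiv.refl A) ∈
      (of.range : Subgroup (HNNExtension G A A (MulEquiv.refl A))) := by
    rw [hprod, h]; exact ⟨g, rfl⟩
  have := ReducedWord.toList_eq_nil_of_mem_of_range _ w hmem
  simp [w] at this


lemma mem_normalClosure_finset {G : Type*} [Group G] {S : Set G} {x : G}
    (hx : x ∈ Subgroup.normalClosure S) :
    ∃ T : Set G, T.Finite ∧ T ⊆ S ∧ x ∈ Subgroup.normalClosure T := by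
  refine Subgroup.closure_induction ?_ ?_ ?_ ?_ hx
  · intro x hx'
    obtain ⟨a, ha, hc⟩ := Group.mem_conjugatesOfSet_iff.1 hx'
    refine ⟨({a} : Set G), Set.finite_singleton a, by simpa using ha,
      Subgroup.conjugatesOfSet_subset_normalClosure <|
        Group.mem_conjugatesOfSet_iff.2 ⟨a, by simp, hc⟩⟩
  · exact ⟨(∅ : Set G), Set.finite_empty, by simp, Subgroup.one_mem _⟩
  · rintro x y - - ⟨T₁, f₁, h₁, m₁⟩ ⟨T₂, f₂, h₂, m₂⟩
    refine ⟨T₁ ∪ T₂, f₁.union f₂, Set.union_subset h₁ h₂, Subgroup.mul_mem _ ?_ ?_⟩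
    · exact Subgroup.normalClosure_mono Set.subset_union_left m₁
    · exact Subgroup.normalClosure_mono Set.subset_union_right m₂
  · rintro x - ⟨T, f, h, m⟩
    exact ⟨T, f, h, Subgroup.inv_mem _ m⟩



lemma ker_fin_normally_generated {X : Type*} [Finite X] {G : Type*} [Group G]
    (π : FreeGroup X →* G) (hπ : Function.Surjective π) (hG : IsFinitelyPresented G) :
    ∃ T : Set (FreeGroup X), T.Finite ∧ π.ker = Subgroup.normalClosure T := by
  obtain ⟨n, R, ⟨e⟩⟩ := hG
  set N := Subgroup.normalClosure (R : Set (FreeGroup (Fin n))) with hN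
  let p : FreeGroup (Fin n) →* G :=
    (e.symm : FreeGroup (Fin n) ⧸ N ≃* G).toMonoidHom.comp (QuotientGroup.mk' N)
  have hp : Function.Surjective p :=
    e.symm.surjective.comp (QuotientGroup.mk'_surjective N)
  have hkerp : p.ker = N := by
    ext x
    simp only [p, MonoidHom.mem_ker, MonoidHom.comp_apply, MulEquiv.coe_toMonoidHom]
    rw [show (1 : G) = e.symm 1 by simp, e.symm.injective.eq_iff]
    simpa using QuotientGroup.eq_one_iff x
  -- lifts
  let φ : FreeGroup (Fin n) →* FreeGroup X :=
    FreeGroup.lift fun i => Classical.choose (hπ (p (FreeGroup.of i)))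
  have hφ : π.comp φ = p := by
    apply FreeGroup.ext_hom
    intro i
    simpa [φ] using Classical.choose_spec (hπ (p (FreeGroup.of i)))
  let ψ : FreeGroup X →* FreeGroup (Fin n) :=
    FreeGroup.lift fun x => Classical.choose (hp (π (FreeGroup.of x)))
  have hψ : p.comp ψ = π := by
    apply FreeGroup.ext_hom
    intro x
    simpa [ψ] using Classical.choose_spec (hp (π (FreeGroup.of x)))
  set T : Set (FreeGroup X) :=
    (φ '' (R : Set (FreeGroup (Fin n)))) ∪
      Set.range (fun x : X => (FreeGroup.of x)⁻¹ * φ (ψ (FreeGroup.of x))) with hT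
  refine ⟨T, (R.finite_toSet.image φ).union (Set.finite_range _), ?_⟩
  set M := Subgroup.normalClosure T with hM
  have hMnormal : M.Normal := Subgroup.normalClosure_normal
  have hMle : M ≤ π.ker := by
    refine Subgroup.normalClosure_le_normal ?_
    rintro s (⟨r, hr, rfl⟩ | ⟨x, rfl⟩)
    · have : π (φ r) = p r := by rw [← hφ]; rfl
      simp only [SetLike.mem_coe, MonoidHom.mem_ker, this]
      rw [← MonoidHom.mem_ker, hkerp]
      exact Subgroup.subset_normalClosure hr
    · have : π (φ (ψ (FreeGroup.of x))) = p (ψ (FreeGroup.of x)) := by rw [← hφ]; rfl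
      simp only [SetLike.mem_coe, MonoidHom.mem_ker, map_mul, map_inv, this]
      rw [show p (ψ (FreeGroup.of x)) = π (FreeGroup.of x) by rw [← hψ]; rfl]
      simp
  have hleM : π.ker ≤ M := by
    intro s hs
    have key : (QuotientGroup.mk' M).comp (φ.comp ψ) = QuotientGroup.mk' M := by
      apply FreeGroup.ext_hom
      intro x
      have hmem : (FreeGroup.of x)⁻¹ * φ (ψ (FreeGroup.of x)) ∈ M :=
        Subgroup.subset_normalClosure (Set.mem_union_right _ ⟨x, rfl⟩)
      simp only [MonoidHom.comp_apply, QuotientGroup.mk'_apply]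
      exact ((QuotientGroup.eq ).2 hmem).symm
    have hψs : ψ s ∈ N := by
      rw [← hkerp, MonoidHom.mem_ker, show p (ψ s) = π s by rw [← hψ]; rfl]
      exact hs
    have hφψs : φ (ψ s) ∈ M := by
      have h1 : N ≤ Subgroup.comap φ (Subgroup.normalClosure (φ '' (R : Set (FreeGroup (Fin n))))) := by
        refine Subgroup.normalClosure_le_normal ?_
        · intro r hr
          exact Subgroup.subset_normalClosure ⟨r, hr, rfl⟩
      have h2 : φ (ψ s) ∈ Subgroup.normalClosure (φ '' (R : Set (FreeGroup (Fin n)))) := h1 hψs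
      exact Subgroup.normalClosure_mono Set.subset_union_left h2
    have : QuotientGroup.mk' M s = QuotientGroup.mk' M (φ (ψ s)) := by
      have := DFunLike.congr_fun key s
      simp only [MonoidHom.comp_apply] at this
      exact this.symm
    rw [← QuotientGroup.ker_mk' M, MonoidHom.mem_ker, this, ← MonoidHom.mem_ker,
      QuotientGroup.ker_mk' M]
    exact hφψs
  exact le_antisymm hleM hMle


section Lamp

variable (n : ℕ) [NeZero n]

private def shiftEquiv' (i : ZMod n) : (ZMod n → ZMod 2) ≃+ (ZMod n → ZMod 2) where
  toFun f := fun j => f (j - i)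
  invFun f := fun j => f (j + i)
  left_inv f := funext fun j => by simp
  right_inv f := funext fun j => by simp
  map_add' f g := rfl

private def lampAction : Multiplicative (ZMod n) →* MulAut (Multiplicative (ZMod n → ZMod 2)) where
  toFun i := AddEquiv.toMultiplicative (shiftEquiv' n i.toAdd)
  map_one' := by
    ext f
    refine Multiplicative.toAdd.injective ?_
    rename_i j
    show (f.toAdd) (j - (0 : ZMod n)) = f.toAdd j
    simp
  map_mul' i i' := by
    ext f
    refine Multiplicative.toAdd.injective ?_
    rename_i j
    show (f.toAdd) (j - (i.toAdd + i'.toAdd)) = (f.toAdd) (j - i.toAdd - i'.toAdd)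
    rw [sub_sub]

private abbrev Lamplighter :=
  SemidirectProduct (Multiplicative (ZMod n → ZMod 2)) (Multiplicative (ZMod n)) (lampAction n)

instance : Finite (Lamplighter n) :=
  Finite.of_injective
    (fun g => (g.left, g.right) :
      Lamplighter n → Multiplicative (ZMod n → ZMod 2) × Multiplicative (ZMod n))
    (by rintro ⟨a, b⟩ ⟨c, d⟩ h; simpa [Prod.ext_iff, SemidirectProduct.ext_iff] using h)

private def δ (m : ZMod n) : ZMod n → ZMod 2 := fun j => if j = m then 1 else 0

private def la : Lamplighter n := inl (ofAdd (δ n 0))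
private def lb : Lamplighter n := inr (ofAdd 1)

private lemma lb_pow (m : ℕ) : (lb n) ^ m = inr (ofAdd (m : ZMod n)) := by
  rw [lb, ← map_pow]
  congr 1
  rw [← ofAdd_nsmul]
  congr 1
  simp [nsmul_eq_mul]

private lemma comm_inl_inr (v : Multiplicative (ZMod n → ZMod 2)) (h : Multiplicative (ZMod n)) :
    ⁅(inl v : Lamplighter n), (inr h : Lamplighter n)⁆ = inl (v * lampAction n h v⁻¹) := by
  have h1 : (inr h : Lamplighter n) * inl v⁻¹ * inr h⁻¹ = inl (lampAction n h v⁻¹) :=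
    (inl_aut (φ := lampAction n) h v⁻¹).symm
  have h2 : ⁅(inl v : Lamplighter n), (inr h : Lamplighter n)⁆
      = inl v * ((inr h) * inl v⁻¹ * inr h⁻¹) := by
    rw [commutatorElement_def, map_inv, map_inv]
    group
  rw [h2, h1, ← map_mul]

private lemma comm_la_lb_pow (m : ℕ) :
    ⁅la n, (lb n) ^ m⁆ = inl (ofAdd (δ n 0 + δ n (m : ZMod n))) := by
  rw [lb_pow, la, comm_inl_inr]
  congr 1
  show ofAdd (δ n 0) * (lampAction n (ofAdd (m : ZMod n)) (ofAdd (δ n 0))⁻¹) = _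
  rw [← ofAdd_neg, show (lampAction n (ofAdd (m : ZMod n)) (ofAdd (-δ n 0)))
      = ofAdd (fun j => -δ n 0 (j - (m : ZMod n))) from rfl, ← ofAdd_add]
  congr 1
  funext j
  have h2 : ∀ x : ZMod 2, -x = x := by decide
  simp only [h2, δ, Pi.add_apply]
  congr 1
  simp [sub_eq_zero, eq_comm]

end Lamp

private lemma pow_mod_two {M : Type*} [Monoid M] {x : M} (hx : x * x = 1) (m : ℕ) :
    x ^ m = x ^ (m % 2) := by
  conv_lhs => rw [← Nat.div_add_mod m 2]
  rw [pow_add, pow_mul, pow_two, hx, one_pow, one_mul]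

private lemma card_closure_le_exp_two {L : Type*} [CommGroup L] [Finite L] {ι : Type*} [Fintype ι]
    (w : ι → L) (hw : ∀ x : L, x * x = 1) :
    Nat.card (Subgroup.closure (Set.range w)) ≤ 2 ^ (Fintype.card ι) := by
  classical
  have hmul : ∀ c₁ c₂ : Multiplicative (ι → ZMod 2),
      (∏ i, w i ^ ((c₁ * c₂).toAdd i).val) =
        (∏ i, w i ^ (c₁.toAdd i).val) * ∏ i, w i ^ (c₂.toAdd i).val := by
    intro c₁ c₂
    rw [← Finset.prod_mul_distrib]
    refine Finset.prod_congr rfl fun i _ => ?_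
    have : ((c₁ * c₂).toAdd i).val = (c₁.toAdd i + c₂.toAdd i).val := rfl
    rw [this, ZMod.val_add, ← pow_mod_two (hw (w i)), pow_add]
  let η : Multiplicative (ι → ZMod 2) →* L := MonoidHom.mk' (fun c => ∏ i, w i ^ (c.toAdd i).val) hmul
  have hrange : Subgroup.closure (Set.range w) ≤ η.range := by
    rw [Subgroup.closure_le]
    rintro x ⟨i, rfl⟩
    refine ⟨ofAdd (Pi.single i 1), ?_⟩
    show (∏ j, w j ^ ((Pi.single i (1 : ZMod 2) : ι → ZMod 2) j).val) = w i
    rw [Finset.prod_eq_single i]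
    · rw [Pi.single_eq_same, ZMod.val_one, pow_one]
    · intro j _ hj
      simp [Pi.single_eq_of_ne hj]
    · simp
  calc Nat.card (Subgroup.closure (Set.range w)) ≤ Nat.card η.range :=
        Subgroup.card_le_of_le hrange
    _ ≤ Nat.card (Multiplicative (ι → ZMod 2)) :=
        Nat.card_le_card_of_surjective η.rangeRestrict η.rangeRestrict_surjective
    _ = 2 ^ (Fintype.card ι) := by
        rw [Nat.card_congr Multiplicative.toAdd, Nat.card_fun, Nat.card_zmod,
          Nat.card_eq_fintype_card]

theorem commutator_freeGroup_not_fg {α : Type} [Finite α] (hα : 2 ≤ Nat.card α) :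
    ¬ (commutator (FreeGroup α)).FG := by
  classical
  rintro ⟨S, hS⟩
  set k := S.card with hk
  set n := k + 2 with hn
  haveI : NeZero n := ⟨by omega⟩
  have hnontriv : Nontrivial α := by
    haveI := Fintype.ofFinite α
    rw [Nat.card_eq_fintype_card] at hα
    exact Fintype.one_lt_card_iff_nontrivial.1 (by omega)
  obtain ⟨x, y, hxy⟩ := exists_pair_ne α
  let θ : FreeGroup α →* Lamplighter n :=
    FreeGroup.lift (fun z => if z = x then la n else if z = y then lb n else 1)
  have hθx : θ (FreeGroup.of x) = la n := by
    rw [show θ (FreeGroup.of x) = _ from FreeGroup.lift_apply_of, if_pos rfl]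
  have hθy : θ (FreeGroup.of y) = lb n := by
    rw [show θ (FreeGroup.of y) = _ from FreeGroup.lift_apply_of, if_neg (Ne.symm hxy), if_pos rfl]
  set Q : Subgroup (Lamplighter n) := (commutator (FreeGroup α)).map θ with hQ
  -- membership of the basic lamp configurations
  have hmemQ : ∀ m : ℕ, (inl (ofAdd (δ n 0 + δ n (m : ZMod n))) : Lamplighter n) ∈ Q := by
    intro m
    rw [← comm_la_lb_pow, ← hθx, ← hθy, ← map_pow, ← map_commutatorElement]
    refine ⟨⁅FreeGroup.of x, FreeGroup.of y ^ m⁆, ?_, rfl⟩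
    rw [commutator_def]
    exact Subgroup.commutator_mem_commutator (Subgroup.mem_top _) (Subgroup.mem_top _)
  -- lower bound : 2 ^ (k + 1) ≤ Nat.card Q
  have h2 : ∀ z : ZMod 2, (if z = 1 then (1 : ZMod 2) else 0) = z := by decide
  have hlow : 2 ^ (k + 1) ≤ Nat.card Q := by
    set g : Fin (k + 1) → (ZMod n → ZMod 2) :=
      fun i => δ n 0 + δ n (((i : ℕ) + 1 : ℕ) : ZMod n) with hg
    set v : (Fin (k + 1) → ZMod 2) → (ZMod n → ZMod 2) :=
      fun c => ∑ i ∈ Finset.univ.filter (fun i => c i = 1), g i with hv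
    have hvmem : ∀ c, (inl (ofAdd (v c)) : Lamplighter n) ∈ Q := by
      intro c
      have : ofAdd (v c) ∈ Q.comap
          (inl : Multiplicative (ZMod n → ZMod 2) →* Lamplighter n) := by
        rw [hv, ofAdd_sum]
        exact Subgroup.prod_mem _ (fun i _ => by
          show (inl (ofAdd (g i)) : Lamplighter n) ∈ Q
          exact hmemQ ((i : ℕ) + 1))
      exact this
    have hcast_inj : ∀ i i' : Fin (k + 1),
        (((i : ℕ) + 1 : ℕ) : ZMod n) = (((i' : ℕ) + 1 : ℕ) : ZMod n) → i = i' := by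
      intro i i' hii
      have h1 : ((i : ℕ) + 1) < n := by have := i.isLt; omega
      have h1' : ((i' : ℕ) + 1) < n := by have := i'.isLt; omega
      have hval := congrArg ZMod.val hii
      rw [ZMod.val_cast_of_lt h1, ZMod.val_cast_of_lt h1'] at hval
      exact Fin.ext (by omega)
    have hvinj : Function.Injective v := by
      intro c c' hcc
      funext i₀
      have hval := congrFun hcc (((i₀ : ℕ) + 1 : ℕ) : ZMod n)
      have hj0 : ((((i₀ : ℕ) + 1 : ℕ)) : ZMod n) ≠ 0 := by
        intro h
        have hval := congrArg ZMod.val h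
        rw [ZMod.val_cast_of_lt (by have := i₀.isLt; omega), ZMod.val_zero] at hval
        omega
      have hterm : ∀ i : Fin (k + 1),
          (g i) ((((i₀ : ℕ) + 1 : ℕ) : ZMod n)) = if i = i₀ then 1 else 0 := by
        intro i
        rw [hg]
        show δ n 0 _ + δ n _ _ = _
        rw [δ, δ, if_neg hj0, zero_add]
        by_cases hii : i = i₀
        · subst hii
          rw [if_pos rfl, if_pos rfl]
        · rw [if_neg (fun hcc => hii (hcast_inj i i₀ hcc.symm)), if_neg hii]
      have hcompute : ∀ c : Fin (k + 1) → ZMod 2,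
          v c ((((i₀ : ℕ) + 1 : ℕ) : ZMod n)) = c i₀ := by
        intro c
        rw [hv]
        show (∑ i ∈ Finset.univ.filter (fun i => c i = 1), g i)
            ((((i₀ : ℕ) + 1 : ℕ) : ZMod n)) = c i₀
        rw [Finset.sum_apply]
        calc (∑ i ∈ Finset.univ.filter (fun i => c i = 1),
              g i ((((i₀ : ℕ) + 1 : ℕ) : ZMod n)))
            = ∑ i ∈ Finset.univ.filter (fun i => c i = 1),
              (if i = i₀ then (1 : ZMod 2) else 0) :=
              Finset.sum_congr rfl (fun i _ => hterm i)
          _ = if i₀ ∈ Finset.univ.filter (fun i => c i = 1) then (1 : ZMod 2) else 0 := by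
              rw [Finset.sum_ite_eq' (Finset.univ.filter (fun i => c i = 1)) i₀ (fun _ => 1)]
          _ = c i₀ := by
              simp only [Finset.mem_filter, Finset.mem_univ, true_and]
              by_cases hc : c i₀ = 1
              · rw [if_pos hc, hc]
              · rw [if_neg hc]
                have : ∀ z : ZMod 2, z ≠ 1 → z = 0 := by decide
                exact (this _ hc).symm
      rw [hcompute c, hcompute c'] at hval
      exact hval
    have hinj : Function.Injective
        (fun c : Fin (k + 1) → ZMod 2 => (⟨_, hvmem c⟩ : ↥Q)) := by
      intro c c' h
      apply hvinj
      have h1 : (inl (ofAdd (v c)) : Lamplighter n) = inl (ofAdd (v c')) :=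
        Subtype.ext_iff.1 h
      exact Multiplicative.ofAdd.injective (inl_injective h1)
    calc 2 ^ (k + 1) = Nat.card (Fin (k + 1) → ZMod 2) := by
          rw [Nat.card_fun, Nat.card_zmod, Nat.card_eq_fintype_card, Fintype.card_fin]
      _ ≤ Nat.card ↥Q := Nat.card_le_card_of_injective _ hinj
  -- upper bound : Nat.card Q ≤ 2 ^ k
  have hQle : Q ≤ (inl :
      Multiplicative (ZMod n → ZMod 2) →* Lamplighter n).range := by
    rw [hQ, commutator_def, Subgroup.map_commutator, range_inl_eq_ker_rightHom]
    rw [Subgroup.commutator_le]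
    intro g1 _ g2 _
    rw [MonoidHom.mem_ker, map_commutatorElement]
    exact commutatorElement_eq_one_iff_mul_comm.2 (mul_comm _ _)
  have hwex : ∀ s : ↥S, ∃ u, (inl u : Lamplighter n) = θ s := by
    intro s
    exact hQle ⟨(s : FreeGroup α), hS ▸ Subgroup.subset_closure s.2, rfl⟩
  choose w hw using hwex
  have hQeq : Q = Subgroup.map inl (Subgroup.closure (Set.range w)) := by
    rw [hQ, ← hS, MonoidHom.map_closure, MonoidHom.map_closure]
    congr 1
    rw [show θ '' (S : Set (FreeGroup α)) = Set.range (fun s : ↥S => θ s) from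
      (Set.image_eq_range _ _)]
    rw [show ((inl : Multiplicative (ZMod n → ZMod 2) →* Lamplighter n) '' Set.range w)
      = Set.range (fun s : ↥S => (inl (w s) : Lamplighter n)) from (Set.range_comp _ _).symm]
    exact congrArg Set.range (funext fun s => (hw s).symm)
  have hsq : ∀ z : Multiplicative (ZMod n → ZMod 2), z * z = 1 := by
    intro z
    have : z.toAdd + z.toAdd = 0 := funext fun j => by
      have : ∀ u : ZMod 2, u + u = 0 := by decide
      exact this _
    rw [← ofAdd_toAdd z, ← ofAdd_add, this, ofAdd_zero]
  have hupper : Nat.card ↥Q ≤ 2 ^ k := by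
    rw [hQeq]
    have hcardeq : Nat.card ↥(Subgroup.map inl (Subgroup.closure (Set.range w)))
        = Nat.card ↥(Subgroup.closure (Set.range w)) :=
      (Nat.card_congr (Subgroup.equivMapOfInjective (Subgroup.closure (Set.range w))
        (inl : Multiplicative (ZMod n → ZMod 2) →* Lamplighter n) inl_injective).toEquiv).symm
    rw [hcardeq]
    have := card_closure_le_exp_two w hsq
    rwa [Fintype.card_coe] at this
  have : (2:ℕ) ^ (k+1) ≤ 2 ^ k := le_trans hlow hupper
  have := (Nat.pow_le_pow_iff_right (by norm_num : 1 < 2)).1 this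
  omega

section Presentation

variable {α : Type}

private def ι : FreeGroup α →* FreeGroup (α ⊕ Unit) := FreeGroup.map Sum.inl

private def tK : FreeGroup (α ⊕ Unit) := FreeGroup.of (Sum.inr ())

private def Φ (A : Subgroup (FreeGroup α)) :
    FreeGroup (α ⊕ Unit) →* HNNExtension (FreeGroup α) A A (MulEquiv.refl A) :=
  FreeGroup.lift (Sum.elim (fun a => of (FreeGroup.of a)) (fun _ => t))

private lemma Φ_tK (A : Subgroup (FreeGroup α)) : Φ A tK = t := by
  simp [Φ, tK]

private lemma Φ_ι (A : Subgroup (FreeGroup α)) (g : FreeGroup α) : Φ A (ι g) = of g := by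
  have h : (Φ A).comp ι = (of : FreeGroup α →* _) := by
    apply FreeGroup.ext_hom
    intro a
    simp [Φ, ι, FreeGroup.map.of]
  exact DFunLike.congr_fun h g

private lemma Φ_surj (A : Subgroup (FreeGroup α)) : Function.Surjective (Φ A) := by
  intro g
  have : g ∈ (Φ A).range :=
    induction_on g (fun h => ⟨ι h, Φ_ι A h⟩) ⟨tK, Φ_tK A⟩
      (fun x y hx hy => mul_mem hx hy) (fun x hx => inv_mem hx)
  exact this

/-- the relator -/
private def rel (c : FreeGroup α) : FreeGroup (α ⊕ Unit) := tK⁻¹ * ι c * tK * (ι c)⁻¹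

private lemma Φ_rel_eq (A : Subgroup (FreeGroup α)) (c : FreeGroup α) :
    Φ A (rel c) = t⁻¹ * of c * t * (of c)⁻¹ := by
  rw [rel]
  simp only [map_mul, map_inv, Φ_tK, Φ_ι]

private lemma Φ_rel_one (A : Subgroup (FreeGroup α)) {c : FreeGroup α} (hc : c ∈ A) :
    Φ A (rel c) = 1 := by
  rw [Φ_rel_eq]
  have h1 : (t⁻¹ * of c * t : HNNExtension _ A A (MulEquiv.refl A)) = of c := by
    have := equiv_symm_eq_conj (φ := MulEquiv.refl A) ⟨c, hc⟩
    simpa [mul_assoc] using this.symm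
  rw [h1, mul_inv_cancel]

private lemma ker_Φ :
    (Φ (commutator (FreeGroup α))).ker
      = Subgroup.normalClosure (rel '' (commutator (FreeGroup α) : Set (FreeGroup α))) := by
  set C := commutator (FreeGroup α) with hC
  set M := Subgroup.normalClosure (rel '' (C : Set (FreeGroup α))) with hM
  apply le_antisymm
  · let f : FreeGroup α →* FreeGroup (α ⊕ Unit) ⧸ M := (QuotientGroup.mk' M).comp ι
    have hx : ∀ a : C, (QuotientGroup.mk' M) tK * f (a : FreeGroup α)
        = f (((MulEquiv.refl C) a : C) : FreeGroup α) * (QuotientGroup.mk' M) tK := by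
      intro a
      have hmem : rel (a : FreeGroup α) ∈ M :=
        Subgroup.subset_normalClosure ⟨(a : FreeGroup α), a.2, rfl⟩
      have h1 : (QuotientGroup.mk' M) (rel (a : FreeGroup α)) = 1 :=
        (QuotientGroup.eq_one_iff _).2 hmem
      rw [rel] at h1
      simp only [map_mul, map_inv] at h1
      set Y := (QuotientGroup.mk' M) tK
      set X := (QuotientGroup.mk' M) (ι (a : FreeGroup α))
      have h2 : Y⁻¹ * X * Y = X := mul_inv_eq_one.1 h1
      have h3 : Y * (Y⁻¹ * X * Y) = Y * X := by rw [h2]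
      show Y * X = X * Y
      calc Y * X = Y * (Y⁻¹ * X * Y) := h3.symm
        _ = X * Y := by group
    let Ψ := HNNExtension.lift f ((QuotientGroup.mk' M) tK) hx
    have hΨΦ : Ψ.comp (Φ C) = QuotientGroup.mk' M := by
      apply FreeGroup.ext_hom
      rintro (a | u)
      · show Ψ (Φ C (FreeGroup.of (Sum.inl a))) = _
        rw [show Φ C (FreeGroup.of (Sum.inl a)) = of (FreeGroup.of a) by simp [Φ]]
        show f (FreeGroup.of a) = _
        simp [f, ι, FreeGroup.map.of]
      · show Ψ (Φ C (FreeGroup.of (Sum.inr u))) = _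
        rw [show Φ C (FreeGroup.of (Sum.inr u)) = t by simp [Φ]]
        show (QuotientGroup.mk' M) tK = _
        simp [tK]
    intro s hs
    have h4 : (QuotientGroup.mk' M) s = 1 := by
      rw [← hΨΦ]
      show Ψ (Φ C s) = 1
      rw [MonoidHom.mem_ker.1 hs, map_one]
    exact (QuotientGroup.eq_one_iff _).1 h4
  · refine Subgroup.normalClosure_le_normal ?_
    rintro _ ⟨c, hc, rfl⟩
    simp only [SetLike.mem_coe, MonoidHom.mem_ker]
    exact Φ_rel_one C hc

end Presentation


/-- **(Used in the proof of Osin, Corollary 1.2.)** Let `F` be a non-cyclic finitely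
generated free group and let `G = ⟨F, t | t⁻¹ f t = f, f ∈ [F, F]⟩` be the HNN-extension
of `F` with both associated subgroups equal to the commutator subgroup `[F, F]` and the
identity as the associated isomorphism. Then `G` is not finitely presented. -/
theorem hnn_commutator_not_finitely_presented {α : Type} [Finite α]
    (hα : 2 ≤ Nat.card α) :
    ¬ IsFinitelyPresented
        (HNNExtension (FreeGroup α) (commutator (FreeGroup α)) (commutator (FreeGroup α))
          (MulEquiv.refl (commutator (FreeGroup α)))) := by
  intro hFP
  classical
  set C := commutator (FreeGroup α) with hC
  obtain ⟨T, hTfin, hTker⟩ := ker_fin_normally_generated (Φ C) (Φ_surj C) hFP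
  have hker := ker_Φ (α := α)
  have hsub : ∀ t : ↥T, ∃ U : Set (FreeGroup (α ⊕ Unit)),
      U.Finite ∧ U ⊆ rel '' (C : Set (FreeGroup α))
        ∧ (t : FreeGroup (α ⊕ Unit)) ∈ Subgroup.normalClosure U := by
    intro t
    refine mem_normalClosure_finset ?_
    rw [← hker, hTker]
    exact Subgroup.subset_normalClosure t.2
  choose U hUfin hUsub hUmem using hsub
  haveI : Finite ↥T := hTfin.to_subtype
  set U₀ := ⋃ t : ↥T, U t with hU₀
  have hU₀fin : U₀.Finite := Set.finite_iUnion hUfin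
  have hU₀sub : U₀ ⊆ rel '' (C : Set (FreeGroup α)) := Set.iUnion_subset hUsub
  have hkerU₀ : (Φ C).ker = Subgroup.normalClosure U₀ := by
    apply le_antisymm
    · rw [hTker]
      refine Subgroup.normalClosure_le_normal ?_
      intro t ht
      exact Subgroup.normalClosure_mono (Set.subset_iUnion U ⟨t, ht⟩) (hUmem ⟨t, ht⟩)
    · rw [hker]
      exact Subgroup.normalClosure_mono hU₀sub
  -- choose preimages
  have hchoice : ∀ u : ↥U₀, ∃ c : FreeGroup α, c ∈ C ∧ rel c = (u : FreeGroup (α ⊕ Unit)) := by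
    intro u
    obtain ⟨c, hc, hcr⟩ := hU₀sub u.2
    exact ⟨c, hc, hcr⟩
  choose cf hcfC hcfr using hchoice
  haveI : Finite ↥U₀ := hU₀fin.to_subtype
  set C₀ : Set (FreeGroup α) := Set.range cf with hC₀
  have hC₀fin : C₀.Finite := Set.finite_range cf
  have hC₀C : C₀ ⊆ (C : Set (FreeGroup α)) := by rintro _ ⟨u, rfl⟩; exact hcfC u
  set A₀ := Subgroup.closure C₀ with hA₀
  have hA₀le : A₀ ≤ C := (Subgroup.closure_le C).2 hC₀C
  have hCle : ∀ c ∈ C, c ∈ A₀ := by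
    intro c hc
    have h1 : rel c ∈ (Φ C).ker := by
      rw [hker]
      exact Subgroup.subset_normalClosure ⟨c, hc, rfl⟩
    rw [hkerU₀] at h1
    have h2 : Φ A₀ (rel c) = 1 := by
      have hle : Subgroup.normalClosure U₀ ≤ (Φ A₀).ker := by
        refine Subgroup.normalClosure_le_normal ?_
        intro u hu
        simp only [SetLike.mem_coe, MonoidHom.mem_ker]
        have h5 := Φ_rel_one A₀ (Subgroup.subset_closure (⟨⟨u, hu⟩, rfl⟩ :
          cf ⟨u, hu⟩ ∈ C₀))
        rw [hcfr ⟨u, hu⟩] at h5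
        exact h5
      exact hle h1
    rw [Φ_rel_eq] at h2
    exact britton_mem (mul_inv_eq_one.1 h2)
  have hCfg : C.FG := ⟨hC₀fin.toFinset, by
    rw [Set.Finite.coe_toFinset]
    exact le_antisymm hA₀le (fun c hc => hCle c hc)⟩
  exact commutator_freeGroup_not_fg hα hCfg
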